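/- Let μ^ω be a random signed measure on ℝ^d over a probability space (Ω, 𝔉, ℙ), i.e., ω ↦ μ^ω(B) is measurable for every bounded Borel set B. Then the map (ω, K) ↦ μ^ω(K) from Ω × 𝒦 to ℝ is jointly measurable, where 𝒦 carries the Borel σ-algebra of the Hausdorff metric. -/

import Mathlib

open MeasureTheory TopologicalSpace Metric Set

namespace RSMAux

variable {d : ℕ}

local notation "E" => EuclideanSpace ℝ (Fin d)

/-- The half-open dyadic cube of generation `n` indexed by `z`. -/
def cube (n : ℕ) (z : Fin d → ℤ) : Set (EuclideanSpace ℝ (Fin d)) :=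
  {x | ∀ i, ⌊(2:ℝ)^n * x i⌋ = z i}

lemma measurableSet_cube (n : ℕ) (z : Fin d → ℤ) : MeasurableSet (cube n z) := by
  have : cube (d := d) n z = ⋂ i, {x : E | ⌊(2:ℝ)^n * x i⌋ = z i} := by
    ext x; simp [cube]
  rw [this]
  refine MeasurableSet.iInter fun i => ?_
  exact (Int.measurable_floor.comp (measurable_const.mul (by fun_prop : Measurable fun x : E => x i)))
    (MeasurableSet.singleton (z i))

lemma mem_cube_bounds {n : ℕ} {z : Fin d → ℤ} {x : E} (hx : x ∈ cube n z) (i : Fin d) :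
    (z i : ℝ) ≤ (2:ℝ)^n * x i ∧ (2:ℝ)^n * x i < z i + 1 := by
  have := hx i
  constructor
  · rw [← this]; exact Int.floor_le _
  · rw [← this]; exact Int.lt_floor_add_one _

lemma dist_le_of_mem_cube {n : ℕ} {z : Fin d → ℤ} {x y : E}
    (hx : x ∈ cube n z) (hy : y ∈ cube n z) :
    dist x y ≤ Real.sqrt d * (1/2:ℝ)^n := by
  have hcoord : ∀ i, dist (x i) (y i) ≤ (1/2:ℝ)^n := by
    intro i
    have h1 : |(2:ℝ)^n * x i - (2:ℝ)^n * y i| < 1 :=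
      Int.abs_sub_lt_one_of_floor_eq_floor ((hx i).trans (hy i).symm)
    have h2 : (2:ℝ)^n * |x i - y i| < 1 := by
      rwa [← abs_of_pos (a := (2:ℝ)^n) (by positivity), ← abs_mul, mul_sub]
    have h3 : |x i - y i| < (1/2:ℝ)^n := by
      rw [div_pow, one_pow, lt_div_iff₀ (by positivity), mul_comm]
      simpa using h2
    rw [Real.dist_eq]
    exact h3.le
  rw [EuclideanSpace.dist_eq]
  have hsum : (∑ i, dist (x i) (y i)^2) ≤ (d : ℝ) * ((1/2:ℝ)^n)^2 := by
    calc (∑ i, dist (x i) (y i)^2) ≤ ∑ _i : Fin d, ((1/2:ℝ)^n)^2 := by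
          refine Finset.sum_le_sum fun i _ => ?_
          exact pow_le_pow_left₀ dist_nonneg (hcoord i) 2
      _ = (d : ℝ) * ((1/2:ℝ)^n)^2 := by simp [mul_comm]
  calc Real.sqrt (∑ i, dist (x i) (y i)^2) ≤ Real.sqrt ((d : ℝ) * ((1/2:ℝ)^n)^2) :=
        Real.sqrt_le_sqrt hsum
    _ = Real.sqrt d * (1/2:ℝ)^n := by
        rw [Real.sqrt_mul (by positivity), Real.sqrt_sq (by positivity)]

lemma isBounded_cube (n : ℕ) (z : Fin d → ℤ) : Bornology.IsBounded (cube (d := d) n z) :=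
  Metric.isBounded_iff.2 ⟨Real.sqrt d * (1/2:ℝ)^n, fun _ hx _ hy => dist_le_of_mem_cube hx hy⟩

lemma pairwise_disjoint_cube (n : ℕ) :
    Pairwise (Function.onFun Disjoint (cube (d := d) n)) := by
  intro z z' hzz'
  rw [Function.onFun, Set.disjoint_left]
  intro x hx hx'
  exact hzz' (funext fun i => (hx i).symm.trans (hx' i))

lemma mem_cube_self (n : ℕ) (x : E) : x ∈ cube n (fun i => ⌊(2:ℝ)^n * x i⌋) := fun _ => rfl

/-- The set of nonempty compact sets meeting a fixed closed set is closed. -/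
lemma isClosed_hit (C : Set (EuclideanSpace ℝ (Fin d))) (hC : IsClosed C) :
    IsClosed {K : NonemptyCompacts (EuclideanSpace ℝ (Fin d)) | ((K : Set E) ∩ C).Nonempty} := by
  rcases C.eq_empty_or_nonempty with rfl | hCne
  · simp only [Set.inter_empty]
    convert isClosed_empty
    ext K; simp [Set.not_nonempty_empty]
  rw [← isOpen_compl_iff]
  rw [Metric.isOpen_iff]
  intro K hK
  simp only [Set.mem_compl_iff, Set.mem_setOf_eq, Set.not_nonempty_iff_eq_empty] at hK
  -- the min of infDist over the compact K is positive
  obtain ⟨x₀, hx₀K, hx₀⟩ := K.isCompact.exists_isMinOn K.nonempty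
    (continuous_infDist_pt C).continuousOn
  have hx₀pos : 0 < infDist x₀ C := by
    rw [← hC.notMem_iff_infDist_pos hCne]
    intro hx₀C
    exact (Set.eq_empty_iff_forall_notMem.1 hK x₀) ⟨hx₀K, hx₀C⟩
  refine ⟨infDist x₀ C, hx₀pos, fun K' hK' => ?_⟩
  simp only [Set.mem_compl_iff, Set.mem_setOf_eq, Set.not_nonempty_iff_eq_empty]
  rw [Set.eq_empty_iff_forall_notMem]
  rintro y ⟨hyK', hyC⟩
  rw [mem_ball, NonemptyCompacts.dist_eq] at hK'
  have hedist : EMetric.hausdorffEdist (K' : Set E) (K : Set E) ≠ ⊤ :=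
    hausdorffEdist_ne_top_of_nonempty_of_bounded K'.nonempty K.nonempty
      K'.isCompact.isBounded K.isCompact.isBounded
  have h1 : infDist y (K : Set E) < infDist x₀ C :=
    lt_of_le_of_lt (infDist_le_hausdorffDist_of_mem hyK' hedist) hK'
  obtain ⟨x, hxK, hxy⟩ := (infDist_lt_iff K.nonempty).1 h1
  have h2 : infDist x C ≤ infDist y C + dist x y := infDist_le_infDist_add_dist
  have h3 : infDist y C = 0 := by
    rw [← hC.closure_eq] at hyC; exact infDist_zero_of_mem (hC.closure_eq ▸ hyC)
  have h4 : infDist x₀ C ≤ infDist x C := hx₀ hxK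
  rw [h3, zero_add, dist_comm] at h2
  exact absurd (h4.trans h2) (not_le.2 hxy)

/-- The closed inner approximations of a cube. -/
def icube (n : ℕ) (z : Fin d → ℤ) (m : ℕ) : Set (EuclideanSpace ℝ (Fin d)) :=
  {x | ∀ i, (z i : ℝ) ≤ (2:ℝ)^n * x i ∧ (2:ℝ)^n * x i ≤ z i + 1 - 1/(m+1)}

lemma isClosed_icube (n : ℕ) (z : Fin d → ℤ) (m : ℕ) : IsClosed (icube (d := d) n z m) := by
  have : icube (d := d) n z m =
      ⋂ i, ((fun x : E => (2:ℝ)^n * x i) ⁻¹' Set.Icc (z i : ℝ) ((z i : ℝ) + 1 - 1/(m+1))) := by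
    ext x; simp [icube, Set.mem_Icc]
  rw [this]
  exact isClosed_iInter fun i =>
    IsClosed.preimage (continuous_const.mul (by fun_prop : Continuous fun x : E => x i)) isClosed_Icc

lemma icube_subset_cube (n : ℕ) (z : Fin d → ℤ) (m : ℕ) :
    icube (d := d) n z m ⊆ cube n z := by
  intro x hx i
  obtain ⟨h1, h2⟩ := hx i
  have hpos : (0:ℝ) < 1/(m+1) := by positivity
  have h3 : (2:ℝ)^n * x i < z i + 1 := by push_cast; push_cast at h2; linarith
  exact Int.floor_eq_iff.2 ⟨h1, by push_cast; push_cast at h3; linarith⟩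

lemma icube_mono (n : ℕ) (z : Fin d → ℤ) : Monotone (icube (d := d) n z) := by
  intro m m' hmm' x hx i
  obtain ⟨h1, h2⟩ := hx i
  refine ⟨h1, h2.trans ?_⟩
  have h3 : (1:ℝ)/(m'+1) ≤ 1/(m+1) := by
    apply one_div_le_one_div_of_le (by positivity)
    push_cast; exact_mod_cast Nat.add_le_add_right hmm' 1
  linarith

lemma cube_eq_iUnion_icube (n : ℕ) (z : Fin d → ℤ) :
    cube (d := d) n z = ⋃ m, icube n z m := by
  apply Set.Subset.antisymm
  · intro x hx
    have hbd := fun i => mem_cube_bounds hx i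
    have hchoice : ∀ i : Fin d, ∃ m : ℕ, (1:ℝ)/(m+1) < (z i : ℝ) + 1 - (2:ℝ)^n * x i := by
      intro i
      exact exists_nat_one_div_lt (by linarith [(hbd i).2])
    choose mi hmi using hchoice
    set M := Finset.univ.sup mi with hM
    refine Set.mem_iUnion.2 ⟨M, fun i => ?_⟩
    refine ⟨(hbd i).1, ?_⟩
    have hle : mi i ≤ M := Finset.le_sup (Finset.mem_univ i)
    have h3 : (1:ℝ)/(M+1) ≤ 1/(mi i + 1) := by
      apply one_div_le_one_div_of_le (by positivity)
      push_cast; exact_mod_cast Nat.add_le_add_right hle 1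
    linarith [hmi i]
  · exact Set.iUnion_subset fun m => icube_subset_cube n z m

lemma measurableSet_hit [MeasurableSpace (NonemptyCompacts (EuclideanSpace ℝ (Fin d)))]
    [BorelSpace (NonemptyCompacts (EuclideanSpace ℝ (Fin d)))] (n : ℕ) (z : Fin d → ℤ) :
    MeasurableSet {K : NonemptyCompacts (EuclideanSpace ℝ (Fin d)) |
      (cube n z ∩ (K : Set E)).Nonempty} := by
  have : {K : NonemptyCompacts (EuclideanSpace ℝ (Fin d)) | (cube n z ∩ (K : Set E)).Nonempty}
      = ⋃ m, {K : NonemptyCompacts (EuclideanSpace ℝ (Fin d)) |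
          ((K : Set E) ∩ icube n z m).Nonempty} := by
    ext K
    simp only [Set.mem_setOf_eq, Set.mem_iUnion]
    constructor
    · rintro ⟨x, hxQ, hxK⟩
      rw [cube_eq_iUnion_icube] at hxQ
      obtain ⟨m, hm⟩ := Set.mem_iUnion.1 hxQ
      exact ⟨m, x, hxK, hm⟩
    · rintro ⟨m, x, hxK, hxm⟩
      exact ⟨x, icube_subset_cube n z m hxm, hxK⟩
  rw [this]
  exact MeasurableSet.iUnion fun m =>
    (isClosed_hit (icube n z m) (isClosed_icube n z m)).measurableSet

end RSMAux

open RSMAux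

theorem random_signed_measure_jointly_measurable {d : ℕ}
    {Ω : Type*} [MeasurableSpace Ω]
    [MeasurableSpace (NonemptyCompacts (EuclideanSpace ℝ (Fin d)))]
    [BorelSpace (NonemptyCompacts (EuclideanSpace ℝ (Fin d)))]
    (μ : Ω → SignedMeasure (EuclideanSpace ℝ (Fin d)))
    (hmeas : ∀ B : Set (EuclideanSpace ℝ (Fin d)), MeasurableSet B →
      Bornology.IsBounded B → Measurable fun ω => μ ω B) :
    Measurable fun p : Ω × NonemptyCompacts (EuclideanSpace ℝ (Fin d)) =>
      μ p.1 (p.2 : Set (EuclideanSpace ℝ (Fin d))) := by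
  classical
  set E := EuclideanSpace ℝ (Fin d)
  -- the dyadic approximation sets
  set g : ℕ → (Fin d → ℤ) → NonemptyCompacts E → Set E := fun n z K =>
    if (cube n z ∩ (K : Set E)).Nonempty then cube n z else ∅ with hg
  set S : ℕ → NonemptyCompacts E → Set E := fun n K => ⋃ z, g n z K with hS
  have hg_meas : ∀ n z K, MeasurableSet (g n z K) := by
    intro n z K
    rw [hg]; dsimp only
    split_ifs
    · exact measurableSet_cube n z
    · exact MeasurableSet.empty
  have hg_sub : ∀ n z K, g n z K ⊆ cube n z := by
    intro n z K
    rw [hg]; dsimp only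
    split_ifs
    · exact le_refl _
    · exact Set.empty_subset _
  have hg_disj : ∀ n K, Pairwise (Function.onFun Disjoint fun z => g n z K) := by
    intro n K z z' hzz'
    exact Disjoint.mono (hg_sub n z K) (hg_sub n z' K) (pairwise_disjoint_cube n hzz')
  have hS_meas : ∀ n K, MeasurableSet (S n K) := fun n K =>
    MeasurableSet.iUnion fun z => hg_meas n z K
  have hK_sub_S : ∀ n (K : NonemptyCompacts E), (K : Set E) ⊆ S n K := by
    intro n K x hx
    refine Set.mem_iUnion.2 ⟨fun i => ⌊(2:ℝ)^n * x i⌋, ?_⟩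
    rw [hg]; dsimp only
    rw [if_pos ⟨x, mem_cube_self n x, hx⟩]
    exact mem_cube_self n x
  have hS_sub : ∀ n (K : NonemptyCompacts E),
      S n K ⊆ cthickening (Real.sqrt d * (1/2:ℝ)^n) (K : Set E) := by
    intro n K x hx
    obtain ⟨z, hz⟩ := Set.mem_iUnion.1 hx
    rw [hg] at hz; dsimp only at hz
    by_cases h : (cube n z ∩ (K : Set E)).Nonempty
    · rw [if_pos h] at hz
      obtain ⟨y, hyQ, hyK⟩ := h
      exact mem_cthickening_of_dist_le x y _ _ hyK (dist_le_of_mem_cube hz hyQ)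
    · rw [if_neg h] at hz; exact absurd hz (Set.notMem_empty x)
  -- each `p ↦ μ p.1 (S n p.2)` is measurable
  have hfn_meas : ∀ n, Measurable fun p : Ω × NonemptyCompacts E => μ p.1 (S n p.2) := by
    intro n
    have hterm : ∀ z : Fin d → ℤ,
        Measurable fun p : Ω × NonemptyCompacts E => μ p.1 (g n z p.2) := by
      intro z
      have : (fun p : Ω × NonemptyCompacts E => μ p.1 (g n z p.2)) =
          fun p => if (cube n z ∩ (p.2 : Set E)).Nonempty then μ p.1 (cube n z) else 0 := by
        funext p
        rw [hg]; dsimp only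
        split_ifs with h
        · rfl
        · exact (μ p.1).empty
      rw [this]
      refine Measurable.ite ?_ ?_ measurable_const
      · exact measurable_snd (measurableSet_hit n z)
      · exact (hmeas (cube n z) (measurableSet_cube n z) (isBounded_cube n z)).comp
          measurable_fst
    refine measurable_of_tendsto_metrizable'
      (Filter.atTop : Filter (Finset (Fin d → ℤ)))
      (fun s => Finset.measurable_sum s fun z _ => hterm z) ?_
    rw [tendsto_pi_nhds]
    intro p
    exact VectorMeasure.hasSum_of_disjoint_iUnion (fun z => hg_meas n z p.2) (hg_disj n p.2)
  -- pointwise convergence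
  refine measurable_of_tendsto_metrizable' (Filter.atTop : Filter ℕ) hfn_meas ?_
  rw [tendsto_pi_nhds]
  intro p
  obtain ⟨ω, K⟩ := p
  dsimp only
  -- decompose μ (S n K) = μ K + μ (S n K \ K)
  have hKmeas : MeasurableSet (K : Set E) := K.isCompact.isClosed.measurableSet
  have hsplit : ∀ n, μ ω (S n K) = μ ω (K : Set E) + μ ω (S n K \ (K : Set E)) := by
    intro n
    rw [VectorMeasure.of_add_of_diff hKmeas (hS_meas n K) (hK_sub_S n K)]
  -- total variation bound
  set ν : Measure E := (μ ω).totalVariation with hν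
  have hνfin : IsFiniteMeasure ν := by
    rw [hν, MeasureTheory.SignedMeasure.totalVariation]
    infer_instance
  have habs : ∀ A : Set E, MeasurableSet A → |μ ω A| ≤ (ν A).toReal := by
    intro A hA
    have h1 : μ ω A = ((μ ω).toJordanDecomposition.posPart A).toReal
        - ((μ ω).toJordanDecomposition.negPart A).toReal := by
      conv_lhs => rw [← (μ ω).toSignedMeasure_toJordanDecomposition]
      rw [JordanDecomposition.toSignedMeasure, Measure.toSignedMeasure_sub_apply hA]
      rfl
    have h2 : ν A = (μ ω).toJordanDecomposition.posPart A
        + (μ ω).toJordanDecomposition.negPart A := by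
      rw [hν, MeasureTheory.SignedMeasure.totalVariation, Measure.add_apply]
    rw [h1, h2, ENNReal.toReal_add (measure_ne_top _ _) (measure_ne_top _ _)]
    have hp : (0:ℝ) ≤ ((μ ω).toJordanDecomposition.posPart A).toReal := ENNReal.toReal_nonneg
    have hq : (0:ℝ) ≤ ((μ ω).toJordanDecomposition.negPart A).toReal := ENNReal.toReal_nonneg
    rw [abs_sub_le_iff]
    constructor <;> linarith
  -- decreasing neighborhoods
  set D : ℕ → Set E := fun n => cthickening (Real.sqrt d * (1/2:ℝ)^n) (K : Set E) \ (K : Set E)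
    with hD
  have hD_meas : ∀ n, MeasurableSet (D n) :=
    fun n => (isClosed_cthickening.measurableSet).diff hKmeas
  have hD_anti : Antitone D := by
    intro n m hnm
    apply Set.diff_subset_diff_left
    apply cthickening_mono
    have : ((1:ℝ)/2)^m ≤ ((1:ℝ)/2)^n :=
      pow_le_pow_of_le_one (by norm_num) (by norm_num) hnm
    nlinarith [Real.sqrt_nonneg (d:ℝ)]
  have hD_inter : (⋂ n, D n) = ∅ := by
    rw [Set.eq_empty_iff_forall_notMem]
    intro x hx
    have hx' : ∀ n, x ∈ cthickening (Real.sqrt d * (1/2:ℝ)^n) (K : Set E) ∧ x ∉ (K : Set E) :=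
      fun n => Set.mem_iInter.1 hx n
    have hxK : x ∉ (K : Set E) := (hx' 0).2
    apply hxK
    have hclosure : x ∈ closure (K : Set E) := by
      rw [closure_eq_iInter_cthickening]
      refine Set.mem_iInter₂.2 fun δ hδ => ?_
      -- choose n with √d (1/2)^n ≤ δ
      have htend : Filter.Tendsto (fun n : ℕ => Real.sqrt d * (1/2:ℝ)^n)
          Filter.atTop (nhds 0) := by
        simpa using (tendsto_pow_atTop_nhds_zero_of_lt_one (by norm_num : (0:ℝ) ≤ 1/2)
          (by norm_num : (1/2:ℝ) < 1)).const_mul (Real.sqrt d)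
      obtain ⟨n, hn⟩ := (htend.eventually (eventually_lt_nhds hδ)).exists
      exact cthickening_mono hn.le _ (hx' n).1
    rwa [K.isCompact.isClosed.closure_eq] at hclosure
  -- the measure of D n tends to 0
  have htend0 : Filter.Tendsto (fun n => (ν (D n)).toReal) Filter.atTop (nhds 0) := by
    have h1 : Filter.Tendsto (fun n => ν (D n)) Filter.atTop (nhds (ν (⋂ n, D n))) :=
      tendsto_measure_iInter_atTop (fun n => (hD_meas n).nullMeasurableSet) hD_anti
        ⟨0, measure_ne_top ν _⟩
    rw [hD_inter, measure_empty] at h1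
    have := (ENNReal.tendsto_toReal (by simp : (0:ENNReal) ≠ ⊤)).comp h1
    exact this
  -- squeeze
  have hsq : Filter.Tendsto (fun n => μ ω (S n K \ (K : Set E))) Filter.atTop (nhds 0) := by
    apply squeeze_zero_norm _ htend0
    intro n
    have hsub : S n K \ (K : Set E) ⊆ D n := Set.diff_subset_diff_left (hS_sub n K)
    have h1 : |μ ω (S n K \ (K : Set E))| ≤ (ν (S n K \ (K : Set E))).toReal :=
      habs _ ((hS_meas n K).diff hKmeas)
    have h2 : (ν (S n K \ (K : Set E))).toReal ≤ (ν (D n)).toReal :=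
      (ENNReal.toReal_le_toReal (measure_ne_top ν _) (measure_ne_top ν _)).2
        (measure_mono hsub)
    calc ‖μ ω (S n K \ (K : Set E))‖ = |μ ω (S n K \ (K : Set E))| := rfl
      _ ≤ (ν (D n)).toReal := h1.trans h2
  have : Filter.Tendsto (fun n => μ ω (S n K)) Filter.atTop (nhds (μ ω (K : Set E))) := by
    have := hsq.const_add (μ ω (K : Set E))
    simp only [add_zero] at this
    convert this using 2 with n
    exact hsplit n
  exact this
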